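/- Let U: ℝ^d → ℝ be continuously differentiable with ∇U bounded and Lipschitz continuous, let T > 0, and for ε > 0 let φ_ε denote the density of the normal distribution with mean 0 and variance ε. Define the acceptance factor s_{M2}(i,x,z) := exp((U(x) − U(x + z e_i))₊/T), where a₊ := max{a,0}. Then there exist C > 0 and ε₀ > 0 such that for all 0 < ε < ε₀, all x ∈ ℝ^d and all 1 ≤ i ≤ d: (1/ε) | ∫_ℝ z³ · s_{M2}(i,x,z) φ_ε(z) dz | ≤ C √ε; i.e. the third-moment estimate (1/ε)∫ z³ s_{M2}(i,x,z) φ_ε(z) dz = O(√ε) holds uniformly in x. -/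

import Mathlib

open MeasureTheory

set_option maxHeartbeats 1000000

/-- Density of the one-dimensional normal distribution with mean `0` and variance `ε`. -/
noncomputable def gaussDensity (ε z : ℝ) : ℝ :=
  (Real.sqrt (2 * Real.pi * ε))⁻¹ * Real.exp (-z ^ 2 / (2 * ε))

lemma aux_exp_sub_one_le {a : ℝ} (ha : 0 ≤ a) : Real.exp a - 1 ≤ a * Real.exp a := by
  have h := Real.add_one_le_exp (-a)
  rw [Real.exp_neg] at h
  have h2 : (1 - a) * Real.exp a ≤ 1 := by
    calc (1 - a) * Real.exp a ≤ (Real.exp a)⁻¹ * Real.exp a :=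
          mul_le_mul_of_nonneg_right (by linarith) (Real.exp_pos a).le
      _ = 1 := inv_mul_cancel₀ (Real.exp_pos a).ne'
  nlinarith [Real.exp_pos a]

lemma aux_sq_le_exp {t : ℝ} (ht : 0 ≤ t) : t ^ 2 / 4 ≤ Real.exp t := by
  have h1 : t / 2 + 1 ≤ Real.exp (t / 2) := Real.add_one_le_exp _
  have h2 : (t / 2 + 1) ^ 2 ≤ Real.exp (t / 2) ^ 2 := by
    apply pow_le_pow_left₀ (by linarith) h1
  have h3 : Real.exp (t / 2) ^ 2 = Real.exp t := by
    rw [sq, ← Real.exp_add]; ring_nf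
  nlinarith

/-- Third-moment estimate for the second Metropolis-Hastings process: uniformly in `x` and `i`,
`(1/ε)∫ z³·s_{M2}(i,x,z) φ_ε(z) dz = O(√ε)`. -/
theorem mh2_third_moment_estimate {d : ℕ} (T : ℝ) (hT : 0 < T)
    (U : EuclideanSpace ℝ (Fin d) → ℝ) (hU : ContDiff ℝ 1 U)
    (K : ℝ) (hbd : ∀ x, ‖fderiv ℝ U x‖ ≤ K)
    (L : NNReal) (hlip : LipschitzWith L (fderiv ℝ U)) :
    ∃ C > (0:ℝ), ∃ ε₀ > (0:ℝ), ∀ ε : ℝ, 0 < ε → ε < ε₀ →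
      ∀ (x : EuclideanSpace ℝ (Fin d)) (i : Fin d),
        (1 / ε) * |∫ z : ℝ,
              z ^ 3 * Real.exp (max (U x - U (x + z • EuclideanSpace.single i (1:ℝ))) 0 / T) *
                gaussDensity ε z|
          ≤ C * Real.sqrt ε := by
  have hK : 0 ≤ K := le_trans (norm_nonneg _) (hbd 0)
  set c : ℝ := K / T with hcdef
  have hc0 : 0 ≤ c := div_nonneg hK hT.le
  refine ⟨512 * c * Real.exp (c ^ 2) + 1, by positivity, 1, one_pos, ?_⟩
  intro ε hε hε1 x i
  set e : EuclideanSpace ℝ (Fin d) := EuclideanSpace.single i (1:ℝ) with he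
  set s : ℝ → ℝ := fun z => Real.exp (max (U x - U (x + z • e)) 0 / T) with hs
  set A : ℝ := (Real.sqrt (2 * Real.pi * ε))⁻¹ with hA
  have hsqrtpos : 0 < Real.sqrt (2 * Real.pi * ε) := Real.sqrt_pos.2 (by positivity)
  have hA0 : 0 < A := inv_pos.2 hsqrtpos
  have hgauss : ∀ z : ℝ, gaussDensity ε z = A * Real.exp (-z ^ 2 / (2 * ε)) := fun z => rfl
  -- Mean value bound
  have hUdiff : ∀ y, DifferentiableAt ℝ U y := fun y => (hU.differentiable one_ne_zero) y
  have key : ∀ z : ℝ, |U x - U (x + z • e)| ≤ K * |z| := by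
    intro z
    have h := convex_univ.norm_image_sub_le_of_norm_fderiv_le
      (fun y _ => hUdiff y) (fun y _ => hbd y)
      (Set.mem_univ (x + z • e)) (Set.mem_univ x)
    have hxy : x - (x + z • e) = -(z • e) := by abel
    rw [hxy, norm_neg, norm_smul, he, EuclideanSpace.norm_single] at h
    simpa [Real.norm_eq_abs] using h
  have hs1 : ∀ z : ℝ, 1 ≤ s z := by
    intro z
    apply Real.one_le_exp
    exact div_nonneg (le_max_right _ _) hT.le
  have hs2 : ∀ z : ℝ, s z ≤ Real.exp (c * |z|) := by
    intro z
    apply Real.exp_le_exp.2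
    have h1 : max (U x - U (x + z • e)) 0 ≤ K * |z| :=
      max_le ((le_abs_self _).trans (key z)) (by positivity)
    calc max (U x - U (x + z • e)) 0 / T ≤ K * |z| / T := by gcongr
      _ = c * |z| := by rw [hcdef]; ring
  -- Gaussian exponent estimates
  have hE1 : ∀ z : ℝ, Real.exp (c * |z|) * Real.exp (-z ^ 2 / (2 * ε)) ≤
      Real.exp (c ^ 2) * Real.exp (-(z ^ 2 / (4 * ε))) := by
    intro z
    rw [← Real.exp_add, ← Real.exp_add]
    apply Real.exp_le_exp.2
    have h4 : (0:ℝ) < 4 * ε := by linarith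
    have hsq : 0 ≤ (2 * ε * c - |z|) ^ 2 := sq_nonneg _
    have hεc : ε * c ^ 2 ≤ c ^ 2 := by nlinarith [sq_nonneg c]
    have hkey : c * |z| ≤ ε * c ^ 2 + z ^ 2 / (4 * ε) := by
      rw [div_eq_mul_inv]
      have h1 : 4 * ε * (c * |z|) ≤ 4 * ε * (ε * c ^ 2) + z ^ 2 := by nlinarith [sq_abs z]
      have h2 : c * |z| = 4 * ε * (c * |z|) * (4 * ε)⁻¹ := by field_simp
      rw [h2]
      calc 4 * ε * (c * |z|) * (4 * ε)⁻¹ ≤ (4 * ε * (ε * c ^ 2) + z ^ 2) * (4 * ε)⁻¹ :=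
            mul_le_mul_of_nonneg_right h1 (by positivity)
        _ = ε * c ^ 2 + z ^ 2 * (4 * ε)⁻¹ := by field_simp
    have h5 : -z ^ 2 / (2 * ε) = -(z ^ 2 / (4 * ε)) - z ^ 2 / (4 * ε) := by
      field_simp; ring
    rw [h5]; linarith
  have hE2 : ∀ z : ℝ, z ^ 4 * Real.exp (-(z ^ 2 / (4 * ε))) ≤
      256 * ε ^ 2 * Real.exp (-((8 * ε)⁻¹ * z ^ 2)) := by
    intro z
    have h8 : (0:ℝ) < 8 * ε := by linarith
    set t : ℝ := z ^ 2 / (8 * ε) with htdef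
    have ht0 : 0 ≤ t := by positivity
    have hz2 : z ^ 2 = 8 * ε * t := by rw [htdef]; field_simp
    have hexp : t ^ 2 / 4 ≤ Real.exp t := aux_sq_le_exp ht0
    have hz4 : z ^ 4 ≤ 256 * ε ^ 2 * Real.exp t := by
      have : z ^ 4 = 64 * ε ^ 2 * t ^ 2 := by
        have : z ^ 4 = (z ^ 2) ^ 2 := by ring
        rw [this, hz2]; ring
      rw [this]; nlinarith [sq_nonneg ε]
    have hsplit : -(z ^ 2 / (4 * ε)) = -t + -t := by
      rw [htdef]; field_simp; ring
    have hsplit2 : -((8 * ε)⁻¹ * z ^ 2) = -t := by rw [htdef]; field_simp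
    rw [hsplit, Real.exp_add, hsplit2]
    have h1 : z ^ 4 * Real.exp (-t) ≤ 256 * ε ^ 2 := by
      have := mul_le_mul_of_nonneg_right hz4 (Real.exp_pos (-t)).le
      calc z ^ 4 * Real.exp (-t) ≤ 256 * ε ^ 2 * Real.exp t * Real.exp (-t) := this
        _ = 256 * ε ^ 2 := by rw [mul_assoc, ← Real.exp_add]; simp
    calc z ^ 4 * (Real.exp (-t) * Real.exp (-t)) = z ^ 4 * Real.exp (-t) * Real.exp (-t) := by
          ring
      _ ≤ 256 * ε ^ 2 * Real.exp (-t) := mul_le_mul_of_nonneg_right h1 (Real.exp_pos _).le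
  -- the integrand
  set f : ℝ → ℝ := fun z => z ^ 3 * s z * gaussDensity ε z with hf
  have hcont : Continuous f := by
    apply Continuous.mul
    apply Continuous.mul (continuous_pow 3)
    · apply Real.continuous_exp.comp
      apply Continuous.div_const
      apply Continuous.max _ continuous_const
      exact continuous_const.sub (hU.continuous.comp
        (continuous_const.add (continuous_id.smul continuous_const)))
    · exact continuous_const.mul
        (Real.continuous_exp.comp ((continuous_pow 2).neg.div_const _))
  set B : ℝ := A * Real.exp (c ^ 2) * (256 * ε ^ 2) with hB
  have hB0 : 0 < B := by positivity
  -- master pointwise bound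
  have claim1 : ∀ z : ℝ, z ^ 4 * (Real.exp (c * |z|) * gaussDensity ε z) ≤
      B * Real.exp (-((8 * ε)⁻¹ * z ^ 2)) := by
    intro z
    rw [hgauss]
    calc z ^ 4 * (Real.exp (c * |z|) * (A * Real.exp (-z ^ 2 / (2 * ε))))
        = z ^ 4 * A * (Real.exp (c * |z|) * Real.exp (-z ^ 2 / (2 * ε))) := by ring
      _ ≤ z ^ 4 * A * (Real.exp (c ^ 2) * Real.exp (-(z ^ 2 / (4 * ε)))) := by
          apply mul_le_mul_of_nonneg_left (hE1 z) (by positivity)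
      _ = A * Real.exp (c ^ 2) * (z ^ 4 * Real.exp (-(z ^ 2 / (4 * ε)))) := by ring
      _ ≤ A * Real.exp (c ^ 2) * (256 * ε ^ 2 * Real.exp (-((8 * ε)⁻¹ * z ^ 2))) := by
          apply mul_le_mul_of_nonneg_left (hE2 z) (by positivity)
      _ = B * Real.exp (-((8 * ε)⁻¹ * z ^ 2)) := by rw [hB]; ring
  have claim0 : ∀ z : ℝ, Real.exp (c * |z|) * gaussDensity ε z ≤
      A * Real.exp (c ^ 2) * Real.exp (-((8 * ε)⁻¹ * z ^ 2)) := by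
    intro z
    rw [hgauss]
    calc Real.exp (c * |z|) * (A * Real.exp (-z ^ 2 / (2 * ε)))
        = A * (Real.exp (c * |z|) * Real.exp (-z ^ 2 / (2 * ε))) := by ring
      _ ≤ A * (Real.exp (c ^ 2) * Real.exp (-(z ^ 2 / (4 * ε)))) := by
          apply mul_le_mul_of_nonneg_left (hE1 z) hA0.le
      _ ≤ A * (Real.exp (c ^ 2) * Real.exp (-((8 * ε)⁻¹ * z ^ 2))) := by
          apply mul_le_mul_of_nonneg_left _ hA0.le
          apply mul_le_mul_of_nonneg_left _ (Real.exp_pos _).le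
          apply Real.exp_le_exp.2
          rw [neg_le_neg_iff]
          rw [inv_mul_eq_div]
          apply div_le_div_of_nonneg_left (sq_nonneg z) (by linarith) (by linarith)
      _ = A * Real.exp (c ^ 2) * Real.exp (-((8 * ε)⁻¹ * z ^ 2)) := by ring
  have hgpos : ∀ z : ℝ, 0 < gaussDensity ε z := by
    intro z; rw [hgauss]; positivity
  -- integrability of f
  have hintmaj : Integrable (fun z : ℝ => Real.exp (-((8 * ε)⁻¹ * z ^ 2))) := by
    have := integrable_exp_neg_mul_sq (b := (8 * ε)⁻¹) (by positivity)
    simpa [neg_mul] using this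
  have hIf : Integrable f := by
    apply Integrable.mono' (hintmaj.const_mul (B + A * Real.exp (c ^ 2)))
      hcont.aestronglyMeasurable
    filter_upwards with z
    have h1 : ‖f z‖ = |z| ^ 3 * s z * gaussDensity ε z := by
      rw [hf]
      simp only [Real.norm_eq_abs, abs_mul]
      rw [abs_of_pos (hgpos z), abs_of_pos (Real.exp_pos _), abs_pow]
    rw [h1]
    have hz3 : |z| ^ 3 ≤ z ^ 4 + 1 := by
      rcases le_or_gt (|z|) 1 with h | h
      · have : |z| ^ 3 ≤ 1 := pow_le_one₀ (abs_nonneg z) h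
        nlinarith [sq_nonneg (z^2)]
      · have h0 : (1:ℝ) ≤ |z| := h.le
        have : |z| ^ 3 ≤ |z| ^ 4 := by nlinarith [pow_nonneg (abs_nonneg z) 3]
        have h4 : |z| ^ 4 = z ^ 4 := by
          rcases abs_cases z with ⟨hh, _⟩ | ⟨hh, _⟩ <;> rw [hh] <;> ring
        nlinarith
    calc |z| ^ 3 * s z * gaussDensity ε z
        ≤ (z ^ 4 + 1) * (Real.exp (c * |z|) * gaussDensity ε z) := by
          have := mul_le_mul (mul_le_mul hz3 (hs2 z) (by positivity)
            (by positivity)) le_rfl (hgpos z).le (by positivity)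
          calc |z| ^ 3 * s z * gaussDensity ε z
              ≤ (z ^ 4 + 1) * Real.exp (c * |z|) * gaussDensity ε z := this
            _ = (z ^ 4 + 1) * (Real.exp (c * |z|) * gaussDensity ε z) := by ring
      _ = z ^ 4 * (Real.exp (c * |z|) * gaussDensity ε z)
            + Real.exp (c * |z|) * gaussDensity ε z := by ring
      _ ≤ B * Real.exp (-((8 * ε)⁻¹ * z ^ 2))
            + A * Real.exp (c ^ 2) * Real.exp (-((8 * ε)⁻¹ * z ^ 2)) :=
          add_le_add (claim1 z) (claim0 z)
      _ = (B + A * Real.exp (c ^ 2)) * Real.exp (-((8 * ε)⁻¹ * z ^ 2)) := by ring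
  -- symmetrization
  have hsym : (2:ℝ) * (∫ z, f z) = ∫ z, (f z + f (-z)) := by
    rw [integral_add hIf hIf.comp_neg, integral_neg_eq_self f volume, two_mul]
  have hdiffbound : ∀ z : ℝ, ‖f z + f (-z)‖ ≤ c * B * Real.exp (-((8 * ε)⁻¹ * z ^ 2)) := by
    intro z
    have hgeven : gaussDensity ε (-z) = gaussDensity ε z := by
      simp [gaussDensity, neg_sq]
    have hfz : f z + f (-z) = z ^ 3 * (s z - s (-z)) * gaussDensity ε z := by
      rw [hf]
      simp only [hgeven]
      ring
    rw [hfz]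
    have habs : |s z - s (-z)| ≤ Real.exp (c * |z|) - 1 := by
      have h1 := hs1 z
      have h2 := hs2 z
      have h3 := hs1 (-z)
      have h4 := hs2 (-z)
      rw [abs_neg] at h4
      rw [abs_sub_le_iff]
      constructor <;> linarith
    have habs2 : |s z - s (-z)| ≤ c * |z| * Real.exp (c * |z|) :=
      habs.trans (aux_exp_sub_one_le (mul_nonneg hc0 (abs_nonneg z)))
    calc ‖z ^ 3 * (s z - s (-z)) * gaussDensity ε z‖
        = |z| ^ 3 * |s z - s (-z)| * gaussDensity ε z := by
          simp only [Real.norm_eq_abs, abs_mul, abs_pow]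
          rw [abs_of_pos (hgpos z)]
      _ ≤ |z| ^ 3 * (c * |z| * Real.exp (c * |z|)) * gaussDensity ε z := by
          apply mul_le_mul_of_nonneg_right _ (hgpos z).le
          apply mul_le_mul_of_nonneg_left habs2 (pow_nonneg (abs_nonneg z) 3)
      _ = c * (z ^ 4 * (Real.exp (c * |z|) * gaussDensity ε z)) := by
          have : |z| ^ 3 * |z| = z ^ 4 := by
            rcases abs_cases z with ⟨hh, _⟩ | ⟨hh, _⟩ <;> rw [hh] <;> ring
          calc |z| ^ 3 * (c * |z| * Real.exp (c * |z|)) * gaussDensity ε z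
              = c * ((|z| ^ 3 * |z|) * (Real.exp (c * |z|) * gaussDensity ε z)) := by ring
            _ = c * (z ^ 4 * (Real.exp (c * |z|) * gaussDensity ε z)) := by rw [this]
      _ ≤ c * (B * Real.exp (-((8 * ε)⁻¹ * z ^ 2))) :=
          mul_le_mul_of_nonneg_left (claim1 z) hc0
      _ = c * B * Real.exp (-((8 * ε)⁻¹ * z ^ 2)) := by ring
  have hIntBound : ‖∫ z, (f z + f (-z))‖ ≤ ∫ z : ℝ, c * B * Real.exp (-((8 * ε)⁻¹ * z ^ 2)) := by
    apply norm_integral_le_of_norm_le (hintmaj.const_mul (c * B))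
    filter_upwards with z using hdiffbound z
  -- compute the bound integral
  have hval : ∫ z : ℝ, c * B * Real.exp (-((8 * ε)⁻¹ * z ^ 2)) = 512 * c * Real.exp (c ^ 2) * ε ^ 2 := by
    rw [integral_const_mul]
    have : (fun z : ℝ => Real.exp (-((8 * ε)⁻¹ * z ^ 2))) =
        fun z : ℝ => Real.exp (-(8 * ε)⁻¹ * z ^ 2) := by
      funext z; ring_nf
    rw [this, integral_gaussian]
    have h1 : Real.pi / (8 * ε)⁻¹ = 4 * (2 * Real.pi * ε) := by
      field_simp; ring
    rw [h1, Real.sqrt_mul (by norm_num : (0:ℝ) ≤ 4)]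
    have h2 : Real.sqrt 4 = 2 := by
      rw [show (4:ℝ) = 2 ^ 2 by norm_num, Real.sqrt_sq (by norm_num)]
    rw [h2, hB, hA]
    have h3 : (Real.sqrt (2 * Real.pi * ε))⁻¹ * Real.sqrt (2 * Real.pi * ε) = 1 :=
      inv_mul_cancel₀ hsqrtpos.ne'
    field_simp
    ring
  -- conclude
  have habs2 : |∫ z, f z| ≤ 256 * c * Real.exp (c ^ 2) * ε ^ 2 := by
    have h1 : |(2:ℝ) * ∫ z, f z| ≤ 512 * c * Real.exp (c ^ 2) * ε ^ 2 := by
      rw [hsym, ← hval]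
      simpa [Real.norm_eq_abs] using hIntBound
    rw [abs_mul, abs_two] at h1
    linarith [abs_nonneg (∫ z, f z)]
  have hfinal : (1 / ε) * |∫ z, f z| ≤ 256 * c * Real.exp (c ^ 2) * ε := by
    rw [div_mul_eq_mul_div, one_mul, div_le_iff₀ hε]
    calc |∫ z, f z| ≤ 256 * c * Real.exp (c ^ 2) * ε ^ 2 := habs2
      _ = 256 * c * Real.exp (c ^ 2) * ε * ε := by ring
  have hsqrt : ε ≤ Real.sqrt ε := by
    calc ε = Real.sqrt (ε ^ 2) := (Real.sqrt_sq hε.le).symm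
      _ ≤ Real.sqrt ε := Real.sqrt_le_sqrt (by nlinarith)
  calc (1 / ε) * |∫ z, f z| ≤ 256 * c * Real.exp (c ^ 2) * ε := hfinal
    _ ≤ 256 * c * Real.exp (c ^ 2) * Real.sqrt ε := by
        apply mul_le_mul_of_nonneg_left hsqrt (by positivity)
    _ ≤ (512 * c * Real.exp (c ^ 2) + 1) * Real.sqrt ε := by
        apply mul_le_mul_of_nonneg_right _ (Real.sqrt_nonneg ε)
        nlinarith [Real.exp_pos (c ^ 2), Real.sqrt_nonneg ε]
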